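/- Precise morphisms are essentially unique: if f₁ : X → F Y₁ and f₂ : X → F Y₂ are both F-precise and h : Y₁ → Y₂ satisfies F h ∘ f₁ = f₂, then h is an isomorphism. Consequently, if F admits precise factorizations w.r.t. a class S, f : S → F Y is F-precise and S ∈ S, then Y ∈ S. -/
import Mathlib

open CategoryTheory CategoryTheory.Limits

universe v u

variable {C : Type u} [Category.{v} C]

/-- A morphism `s : S ⟶ F.obj R` is `F`-precise if whenever `F h ∘ f = F g ∘ s`
there is a diagonal `d : R ⟶ A` with `F d ∘ s = f` and `h ∘ d = g`. -/
def Precise (F : C ⥤ C) {S R : C} (s : S ⟶ F.obj R) : Prop :=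
  ∀ {A D : C} (f : S ⟶ F.obj A) (g : R ⟶ D) (h : A ⟶ D),
    f ≫ F.map h = s ≫ F.map g → ∃ d : R ⟶ A, s ≫ F.map d = f ∧ d ≫ h = g

/-- `F` admits precise factorizations w.r.t. a class `S` of objects. -/
def AdmitsPreciseFact (F : C ⥤ C) (S : Set C) : Prop :=
  ∀ {X Y : C} (f : X ⟶ F.obj Y), X ∈ S →
    ∃ (Y' : C) (h : Y' ⟶ Y) (f' : X ⟶ F.obj Y'),
      Y' ∈ S ∧ Precise F f' ∧ f' ≫ F.map h = f

/-- Precise morphisms are essentially unique, and consequently the codomain of a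
precise morphism out of an `S`-object is again an `S`-object. -/
theorem precise_essentially_unique (F : C ⥤ C) :
    (∀ {X Y₁ Y₂ : C} (f₁ : X ⟶ F.obj Y₁) (f₂ : X ⟶ F.obj Y₂) (h : Y₁ ⟶ Y₂),
      Precise F f₁ → Precise F f₂ → f₁ ≫ F.map h = f₂ → IsIso h) ∧
    (∀ (S : Set C), (∀ {X Y : C}, X ∈ S → (X ≅ Y) → Y ∈ S) →
      AdmitsPreciseFact F S →
      ∀ {X Y : C} (f : X ⟶ F.obj Y), Precise F f → X ∈ S → Y ∈ S) := by
  have main : ∀ {X Y₁ Y₂ : C} (f₁ : X ⟶ F.obj Y₁) (f₂ : X ⟶ F.obj Y₂) (h : Y₁ ⟶ Y₂),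
      Precise F f₁ → Precise F f₂ → f₁ ≫ F.map h = f₂ → IsIso h := by
    intro X Y₁ Y₂ f₁ f₂ h p₁ p₂ hf
    obtain ⟨d, hd1, hd2⟩ := p₂ f₁ (𝟙 Y₂) h (by simp [hf])
    -- d : Y₂ ⟶ Y₁, f₂ ≫ F.map d = f₁, d ≫ h = 𝟙
    obtain ⟨e, he1, he2⟩ := p₁ f₁ (𝟙 Y₁) (h ≫ d)
      (by rw [F.map_comp, ← Category.assoc, hf, hd1]; simp)
    have idem : (h ≫ d) ≫ (h ≫ d) = h ≫ d := by
      rw [Category.assoc, ← Category.assoc d h, hd2]; simp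
    have : h ≫ d = 𝟙 Y₁ := by
      calc h ≫ d = (e ≫ (h ≫ d)) ≫ (h ≫ d) := by rw [he2]; simp
        _ = e ≫ (h ≫ d) := by rw [Category.assoc, idem]
        _ = 𝟙 Y₁ := he2
    exact ⟨d, this, hd2⟩
  refine ⟨main, ?_⟩
  intro S hS hF X Y f pf hX
  obtain ⟨Y', h, f', hY', pf', hfact⟩ := hF f hX
  have : IsIso h := main f' f h pf' pf hfact
  exact hS hY' (asIso h)
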